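/- A complete simple game with t = 2 equivalence classes of sizes n_1, n_2, unique shift-minimal winning type (m_1, n_2 - 1), and n_1 ≥ m_1 + n_2 - 2 is weighted by weights (w_1, w_2) = (n_1 - m_1 + 2, n_1 - m_1 + 1) and quota q = m_1·w_1 + (n_2 - 1)·w_2: every winning type has weight at least q and every losing type has weight strictly less than q. -/
import Mathlib


/-- A complete simple game with `t = 2` classes, unique shift-minimal winning type
`(m1, n2 - 1)`, and `n1 ≥ m1 + n2 - 2` is weighted by weights
`(n1 - m1 + 2, n1 - m1 + 1)` and quota `m1 * w1 + (n2 - 1) * w2`. -/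
theorem stmt14 (n1 n2 m1 : ℕ) (h1 : 1 ≤ m1) (h2 : m1 ≤ n1 - 1) (h3 : 2 ≤ n2)
    (h4 : m1 + n2 - 2 ≤ n1) :
    let w1 := n1 - m1 + 2
    let w2 := n1 - m1 + 1
    let q := m1 * w1 + (n2 - 1) * w2
    ∀ x y : ℕ, x ≤ n1 → y ≤ n2 →
      ((m1 ≤ x ∧ m1 + (n2 - 1) ≤ x + y) → q ≤ x * w1 + y * w2) ∧
      (¬ (m1 ≤ x ∧ m1 + (n2 - 1) ≤ x + y) → x * w1 + y * w2 < q) := by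
  intro w1 w2 q x y hx hy
  have hm : m1 ≤ n1 := by omega
  have hw1 : w1 = w2 + 1 := by simp only [w1, w2]
  have hq : q = (m1 + (n2 - 1)) * w2 + m1 := by
    simp only [q, hw1]; ring_nf
  have hxy : x * w1 + y * w2 = (x + y) * w2 + x := by
    simp only [hw1]; ring
  rw [hxy, hq]
  constructor
  · rintro ⟨ha, hb⟩
    exact Nat.add_le_add (Nat.mul_le_mul_right _ hb) ha
  · intro h
    rcases not_and_or.mp h with hlt | hlt
    · push_neg at hlt
      have hle : x + y ≤ m1 + (n2 - 1) := by omega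
      exact Nat.add_lt_add_of_le_of_lt (Nat.mul_le_mul_right _ hle) (by omega)
    · push_neg at hlt
      have hle : x + y ≤ m1 + (n2 - 1) - 1 := by omega
      have h5 : (x + y) * w2 ≤ (m1 + (n2 - 1) - 1) * w2 := Nat.mul_le_mul_right _ hle
      have h6 : (m1 + (n2 - 1)) * w2 = (m1 + (n2 - 1) - 1) * w2 + w2 := by
        have : m1 + (n2 - 1) = (m1 + (n2 - 1) - 1) + 1 := by omega
        rw [this, Nat.succ_mul]; simp
      have hw2 : w2 = n1 - m1 + 1 := rfl
      omega
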